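/- Let v = Σ_N c_N φ_N be a nonzero element of H* with only finitely many c_N ≠ 0, and let Z be a rooted forest with c_Z ≠ 0 whose total number of vertices is maximal among all forests N with c_N ≠ 0. Then E_Z v = c_Z φ_∅. -/
import Mathlib


open scoped Classical

/-- Concrete (labeled) rooted trees: a root with a list of subtrees. -/
inductive RTree : Type
  | node : List RTree → RTree

/-- Shapes of admissible cuts: at each tree, either the full cut
(everything, including the root, goes to the pruned part `P`), or a choice of
an admissible cut of each child subtree.  A `full` occurring strictly inside
corresponds to cutting the edge above that vertex. -/
inductive CutShape : Type
  | full
  | branch : List CutShape → CutShape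

namespace CK

/-- Number of vertices of a forest. -/
def sizeL : List RTree → ℕ
  | [] => 0
  | .node l :: ts => 1 + sizeL l + sizeL ts

/-- All admissible cuts of a forest (a choice of admissible cut of each tree). -/
def cutsF : List RTree → List (List CutShape)
  | [] => [[]]
  | .node l :: ts =>
      (CutShape.full :: (cutsF l).map CutShape.branch).flatMap
        fun c => (cutsF ts).map (c :: ·)

/-- The root part `R_C(F)` of a cut. -/
def Rcut : List RTree → List CutShape → List RTree
  | [], _ => []
  | _ :: _, [] => []
  | .node _ :: ts, .full :: cs => Rcut ts cs
  | .node l :: ts, .branch ds :: cs => RTree.node (Rcut l ds) :: Rcut ts cs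

/-- The pruned part `P_C(F)` of a cut. -/
def Pcut : List RTree → List CutShape → List RTree
  | [], _ => []
  | _ :: _, [] => []
  | .node l :: ts, .full :: cs => RTree.node l :: Pcut ts cs
  | .node l :: ts, .branch ds :: cs => Pcut l ds ++ Pcut ts cs

/-- Number of `full`s occurring in a cut. -/
def fullsL : List CutShape → ℕ
  | [] => 0
  | .full :: cs => 1 + fullsL cs
  | .branch ds :: cs => fullsL ds + fullsL cs

/-- A list of concrete forests containing (representatives of) every forest
with at most `n` vertices. -/
def forestsUpTo : ℕ → List (List RTree)
  | 0 => [[]]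
  | n+1 => [] :: (forestsUpTo n).flatMap fun l => (forestsUpTo n).map fun F => RTree.node l :: F

/-- Isomorphism of rooted trees (non-planar): a root-preserving bijection, i.e.
the lists of subtrees agree up to permutation and isomorphism. -/
inductive Iso : RTree → RTree → Prop
  | node {l₁ l l₂ : List RTree} : List.Forall₂ Iso l₁ l → l.Perm l₂ → Iso (.node l₁) (.node l₂)

/-- Isomorphism classes of rooted trees. -/
abbrev TreeClass : Type := Quot Iso

/-- Isomorphism classes of rooted forests = multisets of tree classes.
The empty forest is `0`. -/
abbrev ForestClass : Type := Multiset TreeClass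

/-- Isomorphism class of a tree. -/
def clT (t : RTree) : TreeClass := Quot.mk _ t

/-- Isomorphism class of a forest. -/
def clF (F : List RTree) : ForestClass := (F.map clT : List TreeClass)

/-- A concrete representative of a forest class. -/
noncomputable def repF (M : ForestClass) : List RTree := M.toList.map Quot.out

/-- A concrete representative of a tree class. -/
noncomputable def repT (T : TreeClass) : RTree := T.out

/-- Number of vertices of a forest class. -/
noncomputable def sizeC (M : ForestClass) : ℕ := sizeL (repF M)

/-- Number of vertices of a tree class. -/
noncomputable def sizeT (T : TreeClass) : ℕ := sizeL [repT T]

/-- The Hall algebra `H`: finitely supported ℚ-valued functions on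
isomorphism classes of rooted forests, with basis the delta functions. -/
abbrev H : Type := ForestClass →₀ ℚ

/-- The basis element `δ_A` of `H`. -/
noncomputable def delta (A : ForestClass) : H := Finsupp.single A 1

/-- `n(A,B;M)`: the number of admissible cuts `C` of `M` with
`P_C(M) ≅ A` and `R_C(M) ≅ B`. -/
noncomputable def nCuts (A B M : ForestClass) : ℕ :=
  (cutsF (repF M)).countP fun c =>
    decide (clF (Pcut (repF M) c) = A ∧ clF (Rcut (repF M) c) = B)

/-- A finite set of forest classes containing all classes with at most `n`
vertices. -/
noncomputable def forestCand (n : ℕ) : Finset ForestClass :=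
  ((forestsUpTo n).map clF).toFinset

/-- A finite set of tree classes containing all classes with at most `n+1`
vertices. -/
noncomputable def treeCand (n : ℕ) : Finset TreeClass :=
  ((forestsUpTo n).map fun F => clT (RTree.node F)).toFinset

/-- The Hall product on basis elements: `δ_A × δ_B = Σ_M n(A,B;M)·δ_M`
(every `M` with `n(A,B;M) ≠ 0` has exactly `sizeC A + sizeC B` vertices). -/
noncomputable def mulBasis (A B : ForestClass) : H :=
  ∑ M ∈ forestCand (sizeC A + sizeC B), (nCuts A B M : ℚ) • delta M

/-- The Hall product on `H`, extended bilinearly from basis elements. -/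
noncomputable def hmul (f g : H) : H :=
  f.sum fun A a => g.sum fun B b => (a * b) • mulBasis A B

/-- The Connes-Kreimer Lie algebra `n_T` (as a vector space): the span of
isomorphism classes of rooted trees. -/
abbrev nT : Type := TreeClass →₀ ℚ

/-- The basis element of `n_T` corresponding to a rooted tree `T`. -/
noncomputable def tau (T : TreeClass) : nT := Finsupp.single T 1

/-- `a(T₁,T₂;T)`: the number of edges `e` of `T` such that the single-edge cut
at `e` has pruned part `≅ T₁` and root part `≅ T₂`. -/
noncomputable def aCount (T₁ T₂ T : TreeClass) : ℕ :=
  (cutsF [repT T]).countP fun c =>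
    decide (fullsL c = 1 ∧ clF (Pcut [repT T] c) = ({T₁} : Multiset TreeClass)
      ∧ clF (Rcut [repT T] c) = ({T₂} : Multiset TreeClass))

/-- The grafting (pre-Lie) product on basis elements:
`T₁ * T₂ = Σ_T a(T₁,T₂;T)·T`. -/
noncomputable def graftBasis (T₁ T₂ : TreeClass) : nT :=
  ∑ T ∈ treeCand (sizeT T₁ + sizeT T₂), (aCount T₁ T₂ T : ℚ) • tau T

/-- The grafting (pre-Lie) product on `n_T`, extended bilinearly. -/
noncomputable def graft (x y : nT) : nT :=
  x.sum fun T₁ a => y.sum fun T₂ b => (a * b) • graftBasis T₁ T₂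

/-- The Connes-Kreimer bracket `[x,y] = x*y - y*x` on `n_T`. -/
noncomputable def ckBracket (x y : nT) : nT := graft x y - graft y x

/-- `Ẽ_A δ_B = Σ_C δ_{R_C(B)}`, the sum over admissible cuts `C` of `B` with
`P_C(B) ≅ A`. -/
noncomputable def elimBasis (A B : ForestClass) : H :=
  (((cutsF (repF B)).filter fun c => decide (clF (Pcut (repF B) c) = A)).map
    fun c => delta (clF (Rcut (repF B) c))).sum

/-- The elimination operator `E_A` (here on `H ≅ H*`, identifying `φ_B` with
`δ_B`). -/
noncomputable def elim (A : ForestClass) : H →ₗ[ℚ] H :=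
  Finsupp.lsum ℚ fun B => LinearMap.toSpanSingleton ℚ H (elimBasis A B)

/-- `Ẽ^top_A δ_B = Σ_C δ_{P_C(B)}`, the sum over admissible cuts `C` of `B`
with `R_C(B) ≅ A`. -/
noncomputable def topElimBasis (A B : ForestClass) : H :=
  (((cutsF (repF B)).filter fun c => decide (clF (Rcut (repF B) c) = A)).map
    fun c => delta (clF (Pcut (repF B) c))).sum

/-- The top-elimination operator `E^top_A`. -/
noncomputable def topElim (A : ForestClass) : H →ₗ[ℚ] H :=
  Finsupp.lsum ℚ fun B => LinearMap.toSpanSingleton ℚ H (topElimBasis A B)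

/-- `H ⊗ H`, realized as finitely supported functions on pairs of classes. -/
abbrev H2 : Type := (ForestClass × ForestClass) →₀ ℚ

/-- `Δ(δ_M) = Σ δ_A ⊗ δ_B`, the sum over ordered pairs `(A,B)` of classes with
`A ⊔ B ≅ M`. -/
noncomputable def deltaBasis (M : ForestClass) : H2 :=
  ∑ A ∈ M.powerset.toFinset, Finsupp.single (A, M - A) 1

/-- The coproduct `Δ : H → H ⊗ H`. -/
noncomputable def coprod : H →ₗ[ℚ] H2 :=
  Finsupp.lsum ℚ fun M => LinearMap.toSpanSingleton ℚ H2 (deltaBasis M)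

lemma sizeL_cons (t : RTree) (ts : List RTree) :
    sizeL (t :: ts) = sizeL [t] + sizeL ts := by
  cases t with
  | node l => simp [sizeL]

lemma sizeL_eq_sum : ∀ F : List RTree, sizeL F = (F.map fun t => sizeL [t]).sum
  | [] => by simp [sizeL]
  | t :: ts => by rw [sizeL_cons, sizeL_eq_sum ts]; simp

lemma sizeL_perm {F G : List RTree} (h : F.Perm G) : sizeL F = sizeL G := by
  rw [sizeL_eq_sum, sizeL_eq_sum]
  exact (h.map _).sum_eq

lemma iso_size : ∀ {t1 t2 : RTree}, Iso t1 t2 → sizeL [t1] = sizeL [t2] := by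
  intro t1 t2 h
  refine Iso.rec (motive_1 := fun a b _ => sizeL [a] = sizeL [b])
    (motive_2 := fun l1 l2 _ => sizeL l1 = sizeL l2) ?_ ?_ ?_ h
  · intro l₁ l l₂ _ hperm ih
    simp [sizeL, ih, sizeL_perm hperm]
  · rfl
  · intro a b l₁ l₂ _ _ ih1 ih2
    rw [sizeL_cons a l₁, sizeL_cons b l₂, ih1, ih2]

/-- size of a tree class -/
noncomputable def sizeQ : TreeClass → ℕ := Quot.lift (fun t => sizeL [t]) fun _ _ h => iso_size h

lemma sizeL_eq_msize : ∀ F : List RTree, sizeL F = ((clF F).map sizeQ).sum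
  | [] => by simp [clF, sizeL]
  | t :: ts => by
      rw [sizeL_cons, sizeL_eq_msize ts]
      simp only [clF, List.map_cons, Multiset.map_coe, Multiset.sum_coe]
      simp [sizeQ, clT]

lemma clF_repF (M : ForestClass) : clF (repF M) = M := by
  simp only [clF, repF, List.map_map]
  have : (clT ∘ Quot.out) = id := by
    funext q; simp [clT, Quot.out_eq]
  rw [this, List.map_id, Multiset.coe_toList]

lemma sizeC_eq {F : List RTree} {M : ForestClass} (h : clF F = M) : sizeC M = sizeL F := by
  subst h
  unfold sizeC
  rw [sizeL_eq_msize (repF (clF F)), clF_repF, ← sizeL_eq_msize]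

lemma sizeL_eq_zero {F : List RTree} (h : sizeL F = 0) : F = [] := by
  cases F with
  | nil => rfl
  | cons t ts => cases t with | node l => simp [sizeL] at h

lemma mem_cutsF_cons {l ts : List RTree} {c : List CutShape} :
    c ∈ cutsF (RTree.node l :: ts) ↔
      ∃ c0 cs, c = c0 :: cs ∧ cs ∈ cutsF ts ∧
        (c0 = CutShape.full ∨ ∃ ds ∈ cutsF l, c0 = CutShape.branch ds) := by
  simp only [cutsF, List.mem_flatMap, List.mem_cons, List.mem_map]
  constructor
  · rintro ⟨c0, hc0, cs, hcs, rfl⟩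
    exact ⟨c0, cs, rfl, hcs, by rcases hc0 with rfl | ⟨ds, hds, rfl⟩ <;> tauto⟩
  · rintro ⟨c0, cs, rfl, hcs, rfl | ⟨ds, hds, rfl⟩⟩
    · exact ⟨.full, Or.inl rfl, cs, hcs, rfl⟩
    · exact ⟨.branch ds, Or.inr ⟨ds, hds, rfl⟩, cs, hcs, rfl⟩

lemma sizeL_append : ∀ A B : List RTree, sizeL (A ++ B) = sizeL A + sizeL B
  | [], B => by simp [sizeL]
  | .node l :: ts, B => by simp [sizeL, sizeL_append ts B]; omega

theorem cut_size : ∀ (F : List RTree) (c : List CutShape), c ∈ cutsF F →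
    sizeL (Pcut F c) + sizeL (Rcut F c) = sizeL F
  | [], c, _ => by simp [Pcut, Rcut, sizeL]
  | .node l :: ts, c, hc => by
    rcases mem_cutsF_cons.mp hc with ⟨c0, cs, rfl, hcs, rfl | ⟨ds, hds, rfl⟩⟩
    · have := cut_size ts cs hcs
      simp only [Pcut, Rcut, sizeL]
      omega
    · have h1 := cut_size l ds hds
      have h2 := cut_size ts cs hcs
      simp only [Pcut, Rcut, sizeL, sizeL_append]
      omega

theorem rcut_nil : ∀ (F : List RTree) (c : List CutShape), c ∈ cutsF F →
    Rcut F c = [] → c = List.replicate F.length CutShape.full ∧ Pcut F c = F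
  | [], c, hc, _ => by
      simp [cutsF] at hc
      subst hc
      exact ⟨by simp, by simp [Pcut]⟩
  | .node l :: ts, c, hc, hr => by
    rcases mem_cutsF_cons.mp hc with ⟨c0, cs, rfl, hcs, rfl | ⟨ds, hds, rfl⟩⟩
    · simp only [Rcut] at hr
      obtain ⟨h1, h2⟩ := rcut_nil ts cs hcs hr
      refine ⟨by simp [List.replicate, h1], by simp [Pcut, h2]⟩
    · simp [Rcut] at hr

theorem replicate_full_spec : ∀ F : List RTree,
    List.replicate F.length CutShape.full ∈ cutsF F ∧
    Rcut F (List.replicate F.length CutShape.full) = [] ∧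
    Pcut F (List.replicate F.length CutShape.full) = F
  | [] => ⟨by simp [cutsF], by simp [Rcut], by simp [Pcut]⟩
  | .node l :: ts => by
    obtain ⟨h1, h2, h3⟩ := replicate_full_spec ts
    refine ⟨?_, ?_, ?_⟩
    · exact mem_cutsF_cons.mpr ⟨.full, _, by simp [List.replicate], h1, Or.inl rfl⟩
    · simp [List.replicate, Rcut, h2]
    · simp [List.replicate, Pcut, h3]

theorem countP_replicate_full : ∀ F : List RTree,
    (cutsF F).countP (fun c => decide (c = List.replicate F.length CutShape.full)) = 1
  | [] => by simp [cutsF]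
  | .node l :: ts => by
    have hts := countP_replicate_full ts
    simp only [cutsF, List.flatMap_cons, List.countP_append, List.length_cons,
      List.replicate_succ]
    have h1 : ((cutsF ts).map (CutShape.full :: ·)).countP
        (fun c => decide (c = CutShape.full :: List.replicate ts.length CutShape.full)) = 1 := by
      rw [List.countP_map]
      rw [← hts]
      apply List.countP_congr
      intro cs _
      simp
    have h2 : (((cutsF l).map CutShape.branch).flatMap
        fun c => (cutsF ts).map (c :: ·)).countP
        (fun c => decide (c = CutShape.full :: List.replicate ts.length CutShape.full)) = 0 := by
      rw [List.countP_eq_zero]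
      intro x hmem
      rw [List.mem_flatMap] at hmem
      obtain ⟨b, hb, hmem⟩ := hmem
      rw [List.mem_map] at hb hmem
      obtain ⟨ds, _, rfl⟩ := hb
      obtain ⟨cs, _, rfl⟩ := hmem
      simp
    omega

lemma elimBasis_self (Z : ForestClass) : elimBasis Z Z = delta 0 := by
  unfold elimBasis
  set F := repF Z with hF
  have hrep : ∀ c ∈ cutsF F,
      (decide (clF (Pcut F c) = Z) : Bool) =
      (decide (c = List.replicate F.length CutShape.full) : Bool) := by
    intro c hc
    obtain ⟨hm, hr, hp⟩ := replicate_full_spec F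
    have : (clF (Pcut F c) = Z) ↔ (c = List.replicate F.length CutShape.full) := by
      constructor
      · intro h
        have hsz : sizeC Z = sizeL (Pcut F c) := sizeC_eq h
        have htot := cut_size F c hc
        have hFZ : sizeL F = sizeC Z := by rw [hF]; rfl
        have : sizeL (Rcut F c) = 0 := by omega
        exact (rcut_nil F c hc (sizeL_eq_zero this)).1
      · intro h
        subst h
        rw [hp, hF, clF_repF]
    simp [this]
  rw [List.filter_congr hrep]
  have hall : ∀ c ∈ (cutsF F).filter
      (fun c => decide (c = List.replicate F.length CutShape.full)),
      delta (clF (Rcut F c)) = delta 0 := by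
    intro c hc
    rw [List.mem_filter] at hc
    obtain ⟨hc1, hc2⟩ := hc
    rw [decide_eq_true_eq] at hc2
    subst hc2
    rw [(replicate_full_spec F).2.1]
    simp [clF]
  rw [List.map_congr_left hall]
  rw [List.map_const', List.sum_replicate, ← List.countP_eq_length_filter,
    countP_replicate_full F]
  simp

lemma elimBasis_maximal_zero (Z B : ForestClass) (hB : sizeC B ≤ sizeC Z) (hne : B ≠ Z) :
    elimBasis Z B = 0 := by
  unfold elimBasis
  have : (cutsF (repF B)).filter (fun c => decide (clF (Pcut (repF B) c) = Z)) = [] := by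
    rw [List.filter_eq_nil_iff]
    intro c hc
    rw [decide_eq_true_eq]
    intro h
    have hsz : sizeC Z = sizeL (Pcut (repF B) c) := sizeC_eq h
    have htot := cut_size (repF B) c hc
    have hBB : sizeL (repF B) = sizeC B := rfl
    have hr0 : sizeL (Rcut (repF B) c) = 0 := by omega
    have := (rcut_nil (repF B) c hc (sizeL_eq_zero hr0)).2
    rw [this, clF_repF] at h
    exact hne h
  rw [this]
  simp

/-- STATEMENT 14: if `v = Σ_N c_N φ_N` is a nonzero finitely supported element
of `H*` and `Z` is a forest with `c_Z ≠ 0` whose number of vertices is maximal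
among the forests in the support of `v`, then `E_Z v = c_Z·φ_∅`. -/
theorem elim_maximal_term (v : H) (hv : v ≠ 0) (Z : ForestClass)
    (hZ : Z ∈ v.support)
    (hmax : ∀ N ∈ v.support, sizeC N ≤ sizeC Z) :
    elim Z v = v Z • delta 0 := by
  have happ : elim Z v = v.sum fun B b => b • elimBasis Z B := by
    simp [elim, Finsupp.lsum_apply, Finsupp.sum, LinearMap.toSpanSingleton_apply]
  rw [happ, Finsupp.sum]
  rw [Finset.sum_eq_single Z]
  · rw [elimBasis_self]
  · intro B hB hne
    rw [elimBasis_maximal_zero Z B (hmax B hB) hne, smul_zero]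
  · intro h; exact absurd hZ h


end CK
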